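/- In H_{n,r}(q), for every 1 ≤ i ≤ n−1 and every color word c ∈ C^n one has: T_i L_c = L_{cσ_i} T_i + (q−1) L_c if c_i < c_{i+1}; T_i L_c = L_c T_i if c_i = c_{i+1}; and T_i L_c = L_{cσ_i} T_i − (q−1) L_{cσ_i} if c_i > c_{i+1}. Here cσ_i denotes the word obtained from c by exchanging c_i and c_{i+1}. -/

import Mathlib

noncomputable section

open Polynomial

namespace AKS0

/-- Generators: `Sum.inl i` is `T_{i+1}` (0-indexed `T_i`, acting on positions `i, i+1`),
`Sum.inr j` is `ξ_{j+1}` (0-indexed `ξ_j`). -/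
abbrev Gen (n : ℕ) : Type := Fin (n - 1) ⊕ Fin n

abbrev FreeAKS (n : ℕ) : Type := FreeAlgebra ℂ (Gen n)

def tGen (n : ℕ) (i : Fin (n - 1)) : FreeAKS n := FreeAlgebra.ι ℂ (Sum.inl i)

def xGen (n : ℕ) (j : Fin n) : FreeAKS n := FreeAlgebra.ι ℂ (Sum.inr j)

/-- The position `i` of `Fin (n-1)`, viewed in `Fin n`. -/
def idx0 (n : ℕ) (i : Fin (n - 1)) : Fin n := ⟨i.1, by have := i.2; omega⟩

/-- The position `i+1` of `Fin n`, for `i : Fin (n-1)`. -/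
def idx1 (n : ℕ) (i : Fin (n - 1)) : Fin n := ⟨i.1 + 1, by have := i.2; omega⟩

/-- The Lagrange polynomial `P_k(X) = ∏_{l ≠ k} (X - u_l)/(u_k - u_l)`. -/
def lagPoly (r : ℕ) (u : Fin r → ℂ) (k : Fin r) : ℂ[X] :=
  ∏ l ∈ Finset.univ.erase k, (C ((u k - u l)⁻¹) * (X - C (u l)))

/-- The defining relations of the Ariki-Koike-Shoji algebra `H_{n,r}(q)`. -/
inductive Rel (n r : ℕ) (u : Fin r → ℂ) (q : ℂ) : FreeAKS n → FreeAKS n → Prop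
  | quad (i : Fin (n - 1)) :
      Rel n r u q ((tGen n i - algebraMap ℂ (FreeAKS n) q) * (tGen n i + 1)) 0
  | braid (i j : Fin (n - 1)) (h : (j : ℕ) = (i : ℕ) + 1) :
      Rel n r u q (tGen n i * tGen n j * tGen n i) (tGen n j * tGen n i * tGen n j)
  | commTT (i j : Fin (n - 1)) (h : (i : ℕ) + 2 ≤ (j : ℕ) ∨ (j : ℕ) + 2 ≤ (i : ℕ)) :
      Rel n r u q (tGen n i * tGen n j) (tGen n j * tGen n i)
  | xPoly (j : Fin n) :
      Rel n r u q (Polynomial.aeval (xGen n j) (∏ l : Fin r, (X - C (u l)))) 0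
  | commXX (i j : Fin n) :
      Rel n r u q (xGen n i * xGen n j) (xGen n j * xGen n i)
  | cross (i : Fin (n - 1)) :
      Rel n r u q (tGen n i * xGen n (idx0 n i))
        (xGen n (idx1 n i) * tGen n i -
          (q - 1) • ∑ p ∈ Finset.univ.filter (fun p : Fin r × Fin r => p.1 < p.2),
            (u p.2 - u p.1) •
              (Polynomial.aeval (xGen n (idx0 n i)) (lagPoly r u p.1) *
                Polynomial.aeval (xGen n (idx1 n i)) (lagPoly r u p.2)))
  | sumComm (i : Fin (n - 1)) :
      Rel n r u q (tGen n i * (xGen n (idx1 n i) + xGen n (idx0 n i)))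
        ((xGen n (idx1 n i) + xGen n (idx0 n i)) * tGen n i)
  | commTX (i : Fin (n - 1)) (j : Fin n) (h : j ≠ idx0 n i) (h' : j ≠ idx1 n i) :
      Rel n r u q (tGen n i * xGen n j) (xGen n j * tGen n i)

/-- The Ariki-Koike-Shoji algebra `H_{n,r}(q)` (Shoji's presentation, normalized). -/
abbrev AKSAlg (n r : ℕ) (u : Fin r → ℂ) (q : ℂ) : Type := RingQuot (Rel n r u q)

/-- The generator `T_i` in `H_{n,r}(q)`. -/
def Ti (n r : ℕ) (u : Fin r → ℂ) (q : ℂ) (i : Fin (n - 1)) : AKSAlg n r u q :=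
  RingQuot.mkAlgHom ℂ (Rel n r u q) (tGen n i)

/-- The generator `ξ_j` in `H_{n,r}(q)`. -/
def Xi (n r : ℕ) (u : Fin r → ℂ) (q : ℂ) (j : Fin n) : AKSAlg n r u q :=
  RingQuot.mkAlgHom ℂ (Rel n r u q) (xGen n j)

/-- `L_c = P_{c_1}(ξ_1) ⋯ P_{c_n}(ξ_n)`. -/
def Lc (n r : ℕ) (u : Fin r → ℂ) (q : ℂ) (c : Fin n → Fin r) : AKSAlg n r u q :=
  (List.ofFn fun j : Fin n => Polynomial.aeval (Xi n r u q j) (lagPoly r u (c j))).prod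

end AKS0

namespace AKS0

/-- The color word `cσ_i`, obtained from `c` by exchanging `c_i` and `c_{i+1}`. -/
def swapWord (n r : ℕ) (c : Fin n → Fin r) (i : Fin (n - 1)) : Fin n → Fin r :=
  c ∘ Equiv.swap (idx0 n i) (idx1 n i)

section AuxPoly
variable {r : ℕ} (u : Fin r → ℂ)

lemma lagPoly_eq_C_mul (k : Fin r) :
    lagPoly r u k = C (∏ l ∈ Finset.univ.erase k, (u k - u l)⁻¹) *
      ∏ l ∈ Finset.univ.erase k, (X - C (u l)) := by
  rw [lagPoly, Finset.prod_mul_distrib, map_prod]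

lemma X_sub_C_mul_lagPoly (k : Fin r) :
    (X - C (u k)) * lagPoly r u k =
      C (∏ l ∈ Finset.univ.erase k, (u k - u l)⁻¹) * ∏ l : Fin r, (X - C (u l)) := by
  rw [lagPoly_eq_C_mul, ← Finset.mul_prod_erase Finset.univ _ (Finset.mem_univ k)]
  ring

lemma dvd_lagPoly_mul {k l : Fin r} (hkl : k ≠ l) :
    (∏ m : Fin r, (X - C (u m))) ∣ lagPoly r u k * lagPoly r u l := by
  rw [lagPoly_eq_C_mul u k, lagPoly_eq_C_mul u l]
  have h1 : (X - C (u k)) ∣ ∏ m ∈ Finset.univ.erase l, (X - C (u m)) :=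
    Finset.dvd_prod_of_mem _ (Finset.mem_erase.2 ⟨hkl, Finset.mem_univ k⟩)
  have h2 : (∏ m : Fin r, (X - C (u m))) ∣
      (∏ m ∈ Finset.univ.erase k, (X - C (u m))) * ∏ m ∈ Finset.univ.erase l, (X - C (u m)) := by
    rw [← Finset.prod_erase_mul Finset.univ _ (Finset.mem_univ k)]
    exact mul_dvd_mul_left _ h1
  have h3 := h2.mul_left ((C (∏ m ∈ Finset.univ.erase k, (u k - u m)⁻¹)) *
      (C (∏ m ∈ Finset.univ.erase l, (u l - u m)⁻¹)))
  convert h3 using 1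
  ring

lemma sum_lagPoly (hr : 1 ≤ r) (hu : Function.Injective u) :
    ∑ k : Fin r, lagPoly r u k = 1 := by
  have h : ∀ k, lagPoly r u k = Lagrange.basis Finset.univ u k := fun k => rfl
  simp_rw [h]
  exact Lagrange.sum_basis hu.injOn ⟨⟨0, hr⟩, Finset.mem_univ _⟩

/-- commuting with aeval -/
lemma commute_aeval {A : Type*} [Semiring A] [Algebra ℂ A] {x y : A} (h : Commute x y)
    (p : ℂ[X]) : Commute x (aeval y p) := by
  rw [aeval_eq_sum_range]
  exact Commute.sum_right _ _ _ fun i _ => ((h.pow_right i).smul_right _)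

end AuxPoly

section AuxAlg
variable (n r : ℕ) (u : Fin r → ℂ) (q : ℂ)

/-- the quotient map -/
def pim : FreeAKS n →ₐ[ℂ] AKSAlg n r u q := RingQuot.mkAlgHom ℂ (Rel n r u q)

variable {n r u q}

lemma pim_aeval (j : Fin n) (p : ℂ[X]) :
    RingQuot.mkAlgHom ℂ (Rel n r u q) (aeval (xGen n j) p) = aeval (Xi n r u q j) p :=
  (aeval_algHom_apply (RingQuot.mkAlgHom ℂ (Rel n r u q)) (xGen n j) p).symm

/-- abbreviation for idempotent generators -/
def Pe (j : Fin n) (k : Fin r) : AKSAlg n r u q :=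
  aeval (Xi n r u q j) (lagPoly r u k)

lemma aeval_Xi_master (j : Fin n) :
    aeval (Xi n r u q j) (∏ l : Fin r, (X - C (u l))) = 0 := by
  have h := RingQuot.mkAlgHom_rel ℂ (Rel.xPoly (n := n) (r := r) (u := u) (q := q) j)
  rw [map_zero] at h
  rw [← pim_aeval]
  exact h

lemma commute_Xi_Xi (j j' : Fin n) : Commute (Xi n r u q j) (Xi n r u q j') := by
  show Xi n r u q j * Xi n r u q j' = Xi n r u q j' * Xi n r u q j
  rw [Xi, Xi, ← map_mul, ← map_mul]
  exact RingQuot.mkAlgHom_rel ℂ (Rel.commXX j j')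

lemma commute_Pe_Pe (j j' : Fin n) (k k' : Fin r) :
    Commute (Pe j k : AKSAlg n r u q) (Pe j' k') :=
  commute_aeval ((commute_aeval (commute_Xi_Xi j' j) _).symm) _

lemma commute_Xi_Pe (j j' : Fin n) (k : Fin r) :
    Commute (Xi n r u q j) (Pe j' k : AKSAlg n r u q) :=
  commute_aeval (commute_Xi_Xi j j') _

lemma Xi_mul_Pe (j : Fin n) (k : Fin r) :
    Xi n r u q j * Pe j k = u k • Pe j k := by
  have h0 : aeval (Xi n r u q j) ((X - C (u k)) * lagPoly r u k) = 0 := by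
    rw [X_sub_C_mul_lagPoly, map_mul, aeval_Xi_master, mul_zero]
  rw [map_mul, map_sub, aeval_X, aeval_C, sub_mul, sub_eq_zero] at h0
  rw [Pe, h0, Algebra.smul_def]

lemma Pe_mul_Xi (j : Fin n) (k : Fin r) :
    (Pe j k : AKSAlg n r u q) * Xi n r u q j = u k • Pe j k := by
  rw [← (commute_Xi_Pe j j k).eq, Xi_mul_Pe]

lemma Pe_orth (j : Fin n) {k l : Fin r} (hkl : k ≠ l) :
    (Pe j k : AKSAlg n r u q) * Pe j l = 0 := by
  obtain ⟨t, ht⟩ := dvd_lagPoly_mul u hkl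
  rw [Pe, Pe, ← map_mul, ht, map_mul, aeval_Xi_master, zero_mul]

lemma Pe_sum (hr : 1 ≤ r) (hu : Function.Injective u) (j : Fin n) :
    ∑ k : Fin r, (Pe j k : AKSAlg n r u q) = 1 := by
  simp only [Pe]
  rw [← map_sum, sum_lagPoly u hr hu, map_one]

lemma Pe_idem (hr : 1 ≤ r) (hu : Function.Injective u) (j : Fin n) (k : Fin r) :
    (Pe j k : AKSAlg n r u q) * Pe j k = Pe j k := by
  have h : (Pe j k : AKSAlg n r u q) * (∑ l : Fin r, Pe j l) = Pe j k * Pe j k := by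
    rw [Finset.mul_sum]
    exact Finset.sum_eq_single k (fun l _ hl => Pe_orth j (Ne.symm hl)) (by simp)
  rw [Pe_sum hr hu, mul_one] at h
  exact h.symm

end AuxAlg

section AuxE
variable {n r : ℕ} {u : Fin r → ℂ} {q : ℂ}

/-- the two-site idempotent `E_{ab} = P_a(ξ_i) P_b(ξ_{i+1})` -/
def Ee (i : Fin (n - 1)) (a b : Fin r) : AKSAlg n r u q :=
  Pe (idx0 n i) a * Pe (idx1 n i) b

/-- the correction term -/
def Se (i : Fin (n - 1)) : AKSAlg n r u q :=
  ∑ p ∈ Finset.univ.filter (fun p : Fin r × Fin r => p.1 < p.2),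
    (u p.2 - u p.1) • Ee i p.1 p.2

lemma idx0_ne_idx1 (i : Fin (n - 1)) : idx0 n i ≠ idx1 n i := by
  simp [idx0, idx1, Fin.ext_iff]

lemma cross1 (i : Fin (n - 1)) :
    Ti n r u q i * Xi n r u q (idx0 n i) =
      Xi n r u q (idx1 n i) * Ti n r u q i - (q - 1) • Se i := by
  have h := RingQuot.mkAlgHom_rel ℂ (Rel.cross (r := r) (u := u) (q := q) i)
  simp only [map_mul, map_sub, map_smul, map_sum, pim_aeval] at h
  exact h

lemma cross2 (i : Fin (n - 1)) :
    Ti n r u q i * Xi n r u q (idx1 n i) =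
      Xi n r u q (idx0 n i) * Ti n r u q i + (q - 1) • Se i := by
  have h := RingQuot.mkAlgHom_rel ℂ (Rel.sumComm (r := r) (u := u) (q := q) i)
  simp only [map_mul, map_add] at h
  simp only [show RingQuot.mkAlgHom ℂ (Rel n r u q) (tGen n i) = Ti n r u q i from rfl,
    show ∀ j, RingQuot.mkAlgHom ℂ (Rel n r u q) (xGen n j) = Xi n r u q j from
      fun _ => rfl] at h
  rw [mul_add, add_mul, cross1] at h
  have h3 : Ti n r u q i * Xi n r u q (idx1 n i) +
      (Xi n r u q (idx1 n i) * Ti n r u q i - (q - 1) • Se i) =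
      (Xi n r u q (idx0 n i) * Ti n r u q i + (q - 1) • Se i) +
      (Xi n r u q (idx1 n i) * Ti n r u q i - (q - 1) • Se i) := by
    rw [h]; abel
  exact add_right_cancel h3

-- eigen relations for E
lemma Xi0_mul_Ee (i : Fin (n - 1)) (a b : Fin r) :
    Xi n r u q (idx0 n i) * Ee i a b = u a • Ee i a b := by
  rw [Ee, ← mul_assoc, Xi_mul_Pe, smul_mul_assoc]

lemma Xi1_mul_Ee (i : Fin (n - 1)) (a b : Fin r) :
    Xi n r u q (idx1 n i) * Ee i a b = u b • Ee i a b := by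
  rw [Ee, ← mul_assoc, (commute_Xi_Pe (idx1 n i) (idx0 n i) a).eq, mul_assoc,
    Xi_mul_Pe, mul_smul_comm]

lemma Ee_mul_Xi0 (i : Fin (n - 1)) (a b : Fin r) :
    Ee i a b * Xi n r u q (idx0 n i) = u a • Ee i a b := by
  rw [Ee, mul_assoc, (commute_Xi_Pe (idx0 n i) (idx1 n i) b).eq.symm, ← mul_assoc,
    Pe_mul_Xi, smul_mul_assoc]

lemma Ee_mul_Xi1 (i : Fin (n - 1)) (a b : Fin r) :
    Ee i a b * Xi n r u q (idx1 n i) = u b • Ee i a b := by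
  rw [Ee, mul_assoc, Pe_mul_Xi, mul_smul_comm]

lemma Ee_mul_Ee (hr : 1 ≤ r) (hu : Function.Injective u) (i : Fin (n - 1)) (a b c d : Fin r) :
    (Ee i a b : AKSAlg n r u q) * Ee i c d =
      if a = c ∧ b = d then Ee i a b else 0 := by
  have key : (Ee i a b : AKSAlg n r u q) * Ee i c d =
      (Pe (idx0 n i) a * Pe (idx0 n i) c) * (Pe (idx1 n i) b * Pe (idx1 n i) d) := by
    rw [Ee, Ee, mul_assoc, ← mul_assoc (Pe (idx1 n i) b),
      (commute_Pe_Pe (idx1 n i) (idx0 n i) b c).eq, mul_assoc, ← mul_assoc, ← mul_assoc]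
  by_cases hac : a = c
  · subst hac
    by_cases hbd : b = d
    · subst hbd
      rw [key, Pe_idem hr hu, Pe_idem hr hu, if_pos ⟨rfl, rfl⟩, Ee]
    · rw [key, Pe_orth _ hbd, mul_zero, if_neg (by tauto)]
  · rw [key, Pe_orth _ hac, zero_mul, if_neg (by tauto)]

lemma Se_mul_Ee (hr : 1 ≤ r) (hu : Function.Injective u) (i : Fin (n - 1)) (a b : Fin r) :
    (Se i : AKSAlg n r u q) * Ee i a b =
      if a < b then (u b - u a) • Ee i a b else 0 := by
  rw [Se, Finset.sum_mul]
  by_cases hab : a < b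
  · rw [if_pos hab]
    rw [Finset.sum_eq_single_of_mem (a, b) (by simp [hab])]
    · rw [smul_mul_assoc, Ee_mul_Ee hr hu, if_pos ⟨rfl, rfl⟩]
    · intro p _ hp
      rw [smul_mul_assoc, Ee_mul_Ee hr hu, if_neg, smul_zero]
      intro ⟨h1, h2⟩
      exact hp (Prod.ext h1 h2)
  · rw [if_neg hab]
    apply Finset.sum_eq_zero
    intro p hp
    rw [smul_mul_assoc, Ee_mul_Ee hr hu, if_neg, smul_zero]
    rintro ⟨h1, h2⟩
    rw [Finset.mem_filter] at hp
    exact hab (h1 ▸ h2 ▸ hp.2)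


lemma smul_cancel₀ {M : Type*} [AddCommMonoid M] [Module ℂ M] {α : ℂ} (h : α ≠ 0)
    {x y : M} (hxy : α • x = α • y) : x = y := by
  have := congrArg (fun z => α⁻¹ • z) hxy
  simpa [smul_smul, inv_mul_cancel₀ h] using this

lemma EseE (hr : 1 ≤ r) (hu : Function.Injective u) (i : Fin (n - 1)) (a b c d : Fin r) :
    (Ee i c d : AKSAlg n r u q) * (Se i * Ee i a b) =
      if a < b ∧ c = a ∧ d = b then (u b - u a) • Ee i a b else 0 := by
  rw [Se_mul_Ee hr hu]
  by_cases hab : a < b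
  · rw [if_pos hab, mul_smul_comm, Ee_mul_Ee hr hu]
    by_cases hcd : c = a ∧ d = b
    · rw [if_pos hcd, if_pos ⟨hab, hcd⟩]
      obtain ⟨rfl, rfl⟩ := hcd
      rfl
    · rw [if_neg hcd, smul_zero, if_neg (by tauto)]
  · rw [if_neg hab, mul_zero, if_neg (by tauto)]

lemma sandwich1 (i : Fin (n - 1)) (a b c d : Fin r) :
    u a • (Ee i c d * (Ti n r u q i * Ee i a b)) =
      u d • (Ee i c d * (Ti n r u q i * Ee i a b)) -
        (q - 1) • (Ee i c d * (Se i * Ee i a b)) := by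
  calc u a • (Ee i c d * (Ti n r u q i * Ee i a b))
      = Ee i c d * (Ti n r u q i * (Xi n r u q (idx0 n i) * Ee i a b)) := by
        rw [Xi0_mul_Ee, mul_smul_comm, mul_smul_comm]
    _ = Ee i c d * ((Xi n r u q (idx1 n i) * Ti n r u q i - (q - 1) • Se i) * Ee i a b) := by
        rw [← mul_assoc (Ti n r u q i), cross1]
    _ = _ := by
        rw [sub_mul, mul_sub, smul_mul_assoc, mul_smul_comm]
        congr 1
        rw [mul_assoc, ← mul_assoc (Ee i c d), Ee_mul_Xi1, smul_mul_assoc]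

lemma sandwich2 (i : Fin (n - 1)) (a b c d : Fin r) :
    u b • (Ee i c d * (Ti n r u q i * Ee i a b)) =
      u c • (Ee i c d * (Ti n r u q i * Ee i a b)) +
        (q - 1) • (Ee i c d * (Se i * Ee i a b)) := by
  calc u b • (Ee i c d * (Ti n r u q i * Ee i a b))
      = Ee i c d * (Ti n r u q i * (Xi n r u q (idx1 n i) * Ee i a b)) := by
        rw [Xi1_mul_Ee, mul_smul_comm, mul_smul_comm]
    _ = Ee i c d * ((Xi n r u q (idx0 n i) * Ti n r u q i + (q - 1) • Se i) * Ee i a b) := by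
        rw [← mul_assoc (Ti n r u q i), cross2]
    _ = _ := by
        rw [add_mul, mul_add, smul_mul_assoc, mul_smul_comm]
        congr 1
        rw [mul_assoc, ← mul_assoc (Ee i c d), Ee_mul_Xi0, smul_mul_assoc]

lemma Ee_Ti_Ee_vanish (hr : 1 ≤ r) (hu : Function.Injective u) (i : Fin (n - 1))
    {a b c d : Fin r} (h1 : ¬(c = b ∧ d = a)) (h2 : ¬(c = a ∧ d = b)) :
    (Ee i c d : AKSAlg n r u q) * (Ti n r u q i * Ee i a b) = 0 := by
  have hE : (Ee i c d : AKSAlg n r u q) * (Se i * Ee i a b) = 0 := by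
    rw [EseE hr hu, if_neg (by tauto)]
  have k1 := sandwich1 (u := u) (q := q) i a b c d
  have k2 := sandwich2 (u := u) (q := q) i a b c d
  rw [hE, smul_zero, sub_zero] at k1
  rw [hE, smul_zero, add_zero] at k2
  by_cases hda : d = a
  · have hcb : c ≠ b := fun h => h1 ⟨h, hda⟩
    have : (u b - u c) • (Ee i c d * (Ti n r u q i * Ee i a b)) = 0 := by
      have hs := sub_smul (u b) (u c) (Ee i c d * (Ti n r u q i * Ee i a b))
      rw [hs, k2, sub_self]
    exact smul_cancel₀ (sub_ne_zero.2 fun h => hcb (hu h).symm) (by rw [this, smul_zero])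
  · have : (u d - u a) • (Ee i c d * (Ti n r u q i * Ee i a b)) = 0 := by
      have hs := sub_smul (u d) (u a) (Ee i c d * (Ti n r u q i * Ee i a b))
      rw [hs, ← k1, sub_self]
    exact smul_cancel₀ (sub_ne_zero.2 fun h => hda (hu h)) (by rw [this, smul_zero])

lemma Ee_Ti_Ee_diag_lt (hr : 1 ≤ r) (hu : Function.Injective u) (i : Fin (n - 1))
    {a b : Fin r} (hab : a < b) :
    (Ee i a b : AKSAlg n r u q) * (Ti n r u q i * Ee i a b) = (q - 1) • Ee i a b := by
  have hE : (Ee i a b : AKSAlg n r u q) * (Se i * Ee i a b) = (u b - u a) • Ee i a b := by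
    rw [EseE hr hu, if_pos ⟨hab, rfl, rfl⟩]
  have k1 := sandwich1 (u := u) (q := q) i a b a b
  rw [hE] at k1
  have key : (u b - u a) • (Ee i a b * (Ti n r u q i * Ee i a b)) =
      (u b - u a) • ((q - 1) • Ee i a b) := by
    have hs := sub_smul (u b) (u a) (Ee i a b * (Ti n r u q i * Ee i a b))
    rw [hs, smul_comm, k1]
    abel
  exact smul_cancel₀ (sub_ne_zero.2 fun h => (ne_of_lt hab) (hu h).symm) key

lemma Ee_Ti_Ee_diag_gt (hr : 1 ≤ r) (hu : Function.Injective u) (i : Fin (n - 1))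
    {a b : Fin r} (hba : b < a) :
    (Ee i a b : AKSAlg n r u q) * (Ti n r u q i * Ee i a b) = 0 := by
  have hE : (Ee i a b : AKSAlg n r u q) * (Se i * Ee i a b) = 0 := by
    rw [EseE hr hu, if_neg (by simp [not_lt_of_gt hba])]
  have k1 := sandwich1 (u := u) (q := q) i a b a b
  rw [hE, smul_zero, sub_zero] at k1
  have : (u b - u a) • (Ee i a b * (Ti n r u q i * Ee i a b)) = 0 := by
    have hs := sub_smul (u b) (u a) (Ee i a b * (Ti n r u q i * Ee i a b))
    rw [hs, ← k1, sub_self]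
  exact smul_cancel₀ (sub_ne_zero.2 fun h => (ne_of_lt hba) (hu h)) (by rw [this, smul_zero])

lemma sum_Ee (hr : 1 ≤ r) (hu : Function.Injective u) (i : Fin (n - 1)) :
    ∑ p : Fin r × Fin r, (Ee i p.1 p.2 : AKSAlg n r u q) = 1 := by
  rw [Fintype.sum_prod_type]
  simp only [Ee]
  rw [← Finset.sum_mul_sum, Pe_sum hr hu, Pe_sum hr hu, one_mul]

lemma Ti_mul_Ee (hr : 1 ≤ r) (hu : Function.Injective u) (i : Fin (n - 1)) (a b : Fin r) :
    Ti n r u q i * Ee i a b =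
      Ee i b a * (Ti n r u q i * Ee i a b) +
        (if a < b then (q - 1) • Ee i a b else 0) := by
  have expand : Ti n r u q i * Ee i a b =
      ∑ p : Fin r × Fin r, Ee i p.1 p.2 * (Ti n r u q i * Ee i a b) := by
    rw [← Finset.sum_mul, sum_Ee hr hu, one_mul]
  by_cases hab : a = b
  · subst hab
    rw [if_neg (lt_irrefl a), add_zero]
    conv_lhs => rw [expand]
    refine Finset.sum_eq_single (a, a) ?_ (by simp)
    intro p _ hp
    refine Ee_Ti_Ee_vanish hr hu i ?_ ?_ <;>
      · rintro ⟨h1, h2⟩; exact hp (Prod.ext_iff.mpr ⟨h1, h2⟩)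
  · conv_lhs => rw [expand]
    rw [← Finset.add_sum_erase _ _ (Finset.mem_univ (b, a))]
    congr 1
    rw [Finset.sum_eq_single_of_mem (a, b)
      (Finset.mem_erase.2 ⟨by simp [Prod.ext_iff]; tauto, Finset.mem_univ _⟩)]
    · rcases lt_or_gt_of_ne hab with h | h
      · rw [if_pos h]; exact Ee_Ti_Ee_diag_lt hr hu i h
      · rw [if_neg (not_lt_of_gt h)]; exact Ee_Ti_Ee_diag_gt hr hu i h
    · intro p hp hpab
      have hpba : p ≠ (b, a) := Finset.ne_of_mem_erase hp
      refine Ee_Ti_Ee_vanish hr hu i ?_ ?_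
      · rintro ⟨h1, h2⟩; exact hpba (Prod.ext_iff.mpr ⟨h1, h2⟩)
      · rintro ⟨h1, h2⟩; exact hpab (Prod.ext_iff.mpr ⟨h1, h2⟩)

lemma Ee_mul_Ti (hr : 1 ≤ r) (hu : Function.Injective u) (i : Fin (n - 1)) (a b : Fin r) :
    (Ee i b a : AKSAlg n r u q) * Ti n r u q i =
      Ee i b a * (Ti n r u q i * Ee i a b) +
        (if b < a then (q - 1) • Ee i b a else 0) := by
  have expand : (Ee i b a : AKSAlg n r u q) * Ti n r u q i =
      ∑ p : Fin r × Fin r, Ee i b a * (Ti n r u q i * Ee i p.1 p.2) := by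
    conv_lhs => rw [← mul_one (Ti n r u q i)]
    rw [← sum_Ee hr hu i (q := q), Finset.mul_sum, Finset.mul_sum]
  by_cases hab : a = b
  · subst hab
    rw [if_neg (lt_irrefl a), add_zero]
    conv_lhs => rw [expand]
    refine Finset.sum_eq_single (a, a) ?_ (by simp)
    intro p _ hp
    refine Ee_Ti_Ee_vanish hr hu i ?_ ?_
    · rintro ⟨h1, h2⟩; exact hp (Prod.ext_iff.mpr ⟨h2.symm, h1.symm⟩)
    · rintro ⟨h1, h2⟩; exact hp (Prod.ext_iff.mpr ⟨h1.symm, h2.symm⟩)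
  · conv_lhs => rw [expand]
    rw [← Finset.add_sum_erase _ _ (Finset.mem_univ (a, b))]
    congr 1
    rw [Finset.sum_eq_single_of_mem (b, a)
      (Finset.mem_erase.2 ⟨by simp [Prod.ext_iff]; tauto, Finset.mem_univ _⟩)]
    · rcases lt_or_gt_of_ne hab with h | h
      · rw [if_neg (not_lt_of_gt h)]; exact Ee_Ti_Ee_diag_gt hr hu i h
      · rw [if_pos h]; exact Ee_Ti_Ee_diag_lt hr hu i h
    · intro p hp hpba
      have hpab : p ≠ (a, b) := Finset.ne_of_mem_erase hp
      refine Ee_Ti_Ee_vanish hr hu i ?_ ?_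
      · rintro ⟨h1, h2⟩; exact hpab (Prod.ext_iff.mpr ⟨h2.symm, h1.symm⟩)
      · rintro ⟨h1, h2⟩; exact hpba (Prod.ext_iff.mpr ⟨h1.symm, h2.symm⟩)

/-- main two-site relations -/
lemma Ti_Ee_lt (hr : 1 ≤ r) (hu : Function.Injective u) (i : Fin (n - 1))
    {a b : Fin r} (hab : a < b) :
    Ti n r u q i * Ee i a b = Ee i b a * Ti n r u q i + (q - 1) • Ee i a b := by
  rw [Ti_mul_Ee hr hu, Ee_mul_Ti hr hu, if_pos hab, if_neg (asymm hab), add_zero]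

lemma Ti_Ee_eq (hr : 1 ≤ r) (hu : Function.Injective u) (i : Fin (n - 1)) (a : Fin r) :
    Ti n r u q i * Ee i a a = Ee i a a * Ti n r u q i := by
  rw [Ti_mul_Ee hr hu, Ee_mul_Ti hr hu]

lemma Ti_Ee_gt (hr : 1 ≤ r) (hu : Function.Injective u) (i : Fin (n - 1))
    {a b : Fin r} (hba : b < a) :
    Ti n r u q i * Ee i a b = Ee i b a * Ti n r u q i - (q - 1) • Ee i b a := by
  rw [Ti_mul_Ee hr hu, Ee_mul_Ti hr hu, if_neg (not_lt_of_gt hba), if_pos hba, add_zero,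
    add_sub_cancel_right]

end AuxE

section Assemble
variable {n r : ℕ} {u : Fin r → ℂ} {q : ℂ}

lemma noncommProd_univ_fin {M : Type*} [Monoid M] {m : ℕ} (f : Fin m → M)
    (h : ((Finset.univ : Finset (Fin m)) : Set (Fin m)).Pairwise (Function.onFun Commute.{_} f)) :
    Finset.univ.noncommProd f h = (List.ofFn f).prod := by
  rw [Finset.noncommProd]
  simp only [Fin.univ_val_map]
  rw [Multiset.noncommProd_coe]

/-- the product of the `P_{c_j}(ξ_j)` over all positions other than `i, i+1` -/
def rest (i : Fin (n - 1)) (c : Fin n → Fin r) : AKSAlg n r u q :=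
  (((Finset.univ.erase (idx0 n i)).erase (idx1 n i))).noncommProd
    (fun j => Pe j (c j))
    (fun x _ y _ _ => commute_Pe_Pe x y (c x) (c y))

lemma Lc_decomp (i : Fin (n - 1)) (c : Fin n → Fin r) :
    Lc n r u q c = Ee i (c (idx0 n i)) (c (idx1 n i)) * rest i c := by
  have hc : ((Finset.univ : Finset (Fin n)) : Set (Fin n)).Pairwise
      (Function.onFun Commute (fun j => (Pe j (c j) : AKSAlg n r u q))) :=
    fun x _ y _ _ => commute_Pe_Pe x y (c x) (c y)
  have e0 : Lc n r u q c =
      Finset.univ.noncommProd (fun j => (Pe j (c j) : AKSAlg n r u q)) hc :=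
    (noncommProd_univ_fin _ hc).symm
  have h01 : idx1 n i ∈ Finset.univ.erase (idx0 n i) :=
    Finset.mem_erase.2 ⟨Ne.symm (idx0_ne_idx1 i), Finset.mem_univ _⟩
  have step1 : (Finset.univ : Finset (Fin n)) =
      insert (idx0 n i) (insert (idx1 n i)
        ((Finset.univ.erase (idx0 n i)).erase (idx1 n i))) := by
    rw [Finset.insert_erase h01, Finset.insert_erase (Finset.mem_univ _)]
  have hnm0 : idx0 n i ∉ insert (idx1 n i)
      ((Finset.univ.erase (idx0 n i)).erase (idx1 n i)) := by
    simp [Finset.mem_insert, Finset.mem_erase, idx0_ne_idx1 i]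
  have hnm1 : idx1 n i ∉ (Finset.univ.erase (idx0 n i)).erase (idx1 n i) :=
    Finset.notMem_erase _ _
  rw [e0, Finset.noncommProd_congr step1 (fun x _ => rfl)]
  erw [Finset.noncommProd_insert_of_notMem _ _ _ _ hnm0,
    Finset.noncommProd_insert_of_notMem _ _ _ _ hnm1]
  rw [Ee, rest, mul_assoc]

lemma commute_Ti_Xi (i : Fin (n - 1)) (j : Fin n) (h : j ≠ idx0 n i) (h' : j ≠ idx1 n i) :
    Commute (Ti n r u q i) (Xi n r u q j) := by
  show Ti n r u q i * Xi n r u q j = Xi n r u q j * Ti n r u q i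
  rw [Ti, Xi, ← map_mul, ← map_mul]
  exact RingQuot.mkAlgHom_rel ℂ (Rel.commTX i j h h')

lemma Ti_comm_rest (i : Fin (n - 1)) (c : Fin n → Fin r) :
    Commute (Ti n r u q i) (rest i c) := by
  refine Finset.noncommProd_commute _ _ _ _ fun x hx => ?_
  have hx1 : x ≠ idx1 n i := (Finset.mem_erase.1 hx).1
  have hx0 : x ≠ idx0 n i := (Finset.mem_erase.1 (Finset.mem_erase.1 hx).2).1
  exact commute_aeval (commute_Ti_Xi i x hx0 hx1) _

lemma swapWord_idx0 (c : Fin n → Fin r) (i : Fin (n - 1)) :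
    swapWord n r c i (idx0 n i) = c (idx1 n i) := by
  simp [swapWord, Equiv.swap_apply_left]

lemma swapWord_idx1 (c : Fin n → Fin r) (i : Fin (n - 1)) :
    swapWord n r c i (idx1 n i) = c (idx0 n i) := by
  simp [swapWord, Equiv.swap_apply_right]

lemma rest_swap (i : Fin (n - 1)) (c : Fin n → Fin r) :
    (rest i (swapWord n r c i) : AKSAlg n r u q) = rest i c := by
  refine Finset.noncommProd_congr rfl (fun x hx => ?_) _
  have hx1 : x ≠ idx1 n i := (Finset.mem_erase.1 hx).1
  have hx0 : x ≠ idx0 n i := (Finset.mem_erase.1 (Finset.mem_erase.1 hx).2).1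
  rw [show swapWord n r c i x = c x from by
    simp [swapWord, Equiv.swap_apply_of_ne_of_ne hx0 hx1]]

end Assemble

/-- in `H_{n,r}(q)`,
`T_i L_c = L_{cσ_i} T_i + (q−1) L_c` if `c_i < c_{i+1}`,
`T_i L_c = L_c T_i` if `c_i = c_{i+1}`, and
`T_i L_c = L_{cσ_i} T_i − (q−1) L_{cσ_i}` if `c_i > c_{i+1}`. -/
theorem Ti_mul_Lc_q (n r : ℕ) (hn : 1 ≤ n) (hr : 1 ≤ r) (u : Fin r → ℂ)
    (hu : Function.Injective u) (q : ℂ) (i : Fin (n - 1)) (c : Fin n → Fin r) :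
    (c (idx0 n i) < c (idx1 n i) →
      Ti n r u q i * Lc n r u q c =
        Lc n r u q (swapWord n r c i) * Ti n r u q i + (q - 1) • Lc n r u q c) ∧
    (c (idx0 n i) = c (idx1 n i) →
      Ti n r u q i * Lc n r u q c = Lc n r u q c * Ti n r u q i) ∧
    (c (idx1 n i) < c (idx0 n i) →
      Ti n r u q i * Lc n r u q c =
        Lc n r u q (swapWord n r c i) * Ti n r u q i -
          (q - 1) • Lc n r u q (swapWord n r c i)) := by
  have hdec := Lc_decomp (u := u) (q := q) i c
  have hdec' := Lc_decomp (u := u) (q := q) i (swapWord n r c i)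
  rw [swapWord_idx0, swapWord_idx1, rest_swap] at hdec'
  refine ⟨fun hlt => ?_, fun heq => ?_, fun hgt => ?_⟩
  · rw [hdec, hdec', ← mul_assoc, Ti_Ee_lt hr hu i hlt, add_mul, smul_mul_assoc,
      mul_assoc, (Ti_comm_rest i c).eq, ← mul_assoc]
  · rw [hdec, ← mul_assoc, heq, Ti_Ee_eq hr hu, mul_assoc, (Ti_comm_rest i c).eq, ← mul_assoc]
  · rw [hdec, hdec', ← mul_assoc, Ti_Ee_gt hr hu i hgt, sub_mul, smul_mul_assoc,
      mul_assoc, (Ti_comm_rest i c).eq, ← mul_assoc]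

end AKS0
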